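/- Let q be a prime power, k a field containing F_q, and (α,β,γ) ∈ k^3 \ {0}. The plane curve defined by γ(x^q y - x y^q) + α(y^q z - y z^q) + β(z^q x - z x^q) = 0 over the algebraic closure of k has exactly one singular point, namely [α^{1/q} : β^{1/q} : γ^{1/q}]: the three partial derivatives of the defining polynomial vanish simultaneously at a point [x_0:y_0:z_0] if and only if (x_0^q, y_0^q, z_0^q) is proportional to (α, β, γ). -/

import Mathlib

open MvPolynomial

/-- The curve `{γ(x^q y - x y^q) + α(y^q z - y z^q) + β(z^q x - z x^q) = 0}` has exactly
one singular point, namely `[α^{1/q} : β^{1/q} : γ^{1/q}]`: the three partial derivatives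
vanish at `(x₀,y₀,z₀) ≠ 0` iff `(x₀^q, y₀^q, z₀^q)` is proportional to `(α, β, γ)`. -/
theorem stmt11 (p e q : ℕ) (hp : p.Prime) (he : e ≠ 0) (hq : q = p ^ e)
    (K : Type) [Field K] [IsAlgClosed K] [CharP K p]
    (α β γ : K) (h0 : ¬(α = 0 ∧ β = 0 ∧ γ = 0))
    (F : MvPolynomial (Fin 3) K)
    (hF : F = C γ * (X 0 ^ q * X 1 - X 0 * X 1 ^ q)
            + C α * (X 1 ^ q * X 2 - X 1 * X 2 ^ q)
            + C β * (X 2 ^ q * X 0 - X 2 * X 0 ^ q)) :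
    (∀ v : Fin 3 → K, v ≠ 0 →
      ((∀ i, MvPolynomial.eval v (pderiv i F) = 0) ↔
        ∃ l : K, l ≠ 0 ∧ v 0 ^ q = l * α ∧ v 1 ^ q = l * β ∧ v 2 ^ q = l * γ)) ∧
    (∃! P : Projectivization K (Fin 3 → K),
      ∀ i, MvPolynomial.eval P.rep (pderiv i F) = 0) := by
  have hq0 : (q : K) = 0 := by
    rw [hq]; push_cast
    rw [CharP.cast_eq_zero K p]
    exact zero_pow he
  have hqpos : 0 < q := by
    rw [hq]; exact pow_pos hp.pos e
  -- injectivity of the q-power map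
  haveI : Fact p.Prime := ⟨hp⟩
  have qinj : ∀ a b : K, a ^ q = b ^ q → a = b := by
    intro a b hab
    have h1 : (a - b) ^ q = 0 := by
      rw [hq, sub_pow_char_pow, ← hq, hab, sub_self]
    exact sub_eq_zero.1 (pow_eq_zero_iff hqpos.ne' |>.1 h1)
  -- the three partial derivatives
  have d0 : ∀ v : Fin 3 → K, eval v (pderiv 0 F) = β * v 2 ^ q - γ * v 1 ^ q := by
    intro v; simp [hF, pderiv_mul, pderiv_pow, hq0]; ring
  have d1 : ∀ v : Fin 3 → K, eval v (pderiv 1 F) = γ * v 0 ^ q - α * v 2 ^ q := by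
    intro v; simp [hF, pderiv_mul, pderiv_pow, hq0]; ring
  have d2 : ∀ v : Fin 3 → K, eval v (pderiv 2 F) = α * v 1 ^ q - β * v 0 ^ q := by
    intro v; simp [hF, pderiv_mul, pderiv_pow, hq0]; ring
  have hmain : ∀ v : Fin 3 → K, v ≠ 0 →
      ((∀ i, MvPolynomial.eval v (pderiv i F) = 0) ↔
        ∃ l : K, l ≠ 0 ∧ v 0 ^ q = l * α ∧ v 1 ^ q = l * β ∧ v 2 ^ q = l * γ) := by
    intro v hv
    constructor
    · intro h
      have h0' := h 0; have h1' := h 1; have h2' := h 2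
      rw [d0 v, sub_eq_zero] at h0'
      rw [d1 v, sub_eq_zero] at h1'
      rw [d2 v, sub_eq_zero] at h2'
      -- h0' : β * z^q = γ * y^q, h1' : γ * x^q = α * z^q, h2' : α * y^q = β * x^q
      rcases eq_or_ne α 0 with hα | hα
      · rcases eq_or_ne β 0 with hβ | hβ
        · have hγ : γ ≠ 0 := fun hγ => h0 ⟨hα, hβ, hγ⟩
          have hx : v 0 = 0 := by
            have : γ * v 0 ^ q = 0 := by rw [h1', hα, zero_mul]
            exact qinj _ 0 (by simpa [zero_pow hqpos.ne', hγ] using this)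
          have hy : v 1 = 0 := by
            have : γ * v 1 ^ q = 0 := by rw [← h0', hβ, zero_mul]
            exact qinj _ 0 (by simpa [zero_pow hqpos.ne', hγ] using this)
          have hz : v 2 ≠ 0 := by
            intro hz; apply hv; funext i; fin_cases i <;> assumption
          refine ⟨v 2 ^ q / γ, div_ne_zero (pow_ne_zero _ hz) hγ, ?_, ?_, ?_⟩
          · rw [hx, zero_pow hqpos.ne', hα, mul_zero]
          · rw [hy, zero_pow hqpos.ne', hβ, mul_zero]
          · field_simp
        · have hx : v 0 = 0 := by
            have : β * v 0 ^ q = 0 := by rw [← h2', hα, zero_mul]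
            exact qinj _ 0 (by simpa [zero_pow hqpos.ne', hβ] using this)
          have hy : v 1 ≠ 0 := by
            intro hy
            have hz : v 2 = 0 := by
              have : β * v 2 ^ q = 0 := by rw [h0', hy, zero_pow hqpos.ne', mul_zero]
              exact qinj _ 0 (by simpa [zero_pow hqpos.ne', hβ] using this)
            apply hv; funext i; fin_cases i <;> assumption
          refine ⟨v 1 ^ q / β, div_ne_zero (pow_ne_zero _ hy) hβ, ?_, ?_, ?_⟩
          · rw [hx, zero_pow hqpos.ne', hα, mul_zero]
          · field_simp
          · field_simp
            linear_combination h0'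
      · have hx : v 0 ≠ 0 := by
          intro hx
          have hz : v 2 = 0 := by
            have : α * v 2 ^ q = 0 := by rw [← h1', hx, zero_pow hqpos.ne', mul_zero]
            exact qinj _ 0 (by simpa [zero_pow hqpos.ne', hα] using this)
          have hy : v 1 = 0 := by
            have : α * v 1 ^ q = 0 := by rw [h2', hx, zero_pow hqpos.ne', mul_zero]
            exact qinj _ 0 (by simpa [zero_pow hqpos.ne', hα] using this)
          apply hv; funext i; fin_cases i <;> assumption
        refine ⟨v 0 ^ q / α, div_ne_zero (pow_ne_zero _ hx) hα, ?_, ?_, ?_⟩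
        · field_simp
        · field_simp; linear_combination h2'
        · field_simp; linear_combination -h1'
    · rintro ⟨l, hl, hx, hy, hz⟩ i
      fin_cases i
      · show eval v (pderiv 0 F) = 0
        rw [d0 v, hy, hz]; ring
      · show eval v (pderiv 1 F) = 0
        rw [d1 v, hx, hz]; ring
      · show eval v (pderiv 2 F) = 0
        rw [d2 v, hx, hy]; ring
  refine ⟨hmain, ?_⟩
  -- existence of the singular point
  obtain ⟨a, ha⟩ := IsAlgClosed.exists_pow_nat_eq (k := K) α hqpos
  obtain ⟨b, hb⟩ := IsAlgClosed.exists_pow_nat_eq (k := K) β hqpos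
  obtain ⟨c, hc⟩ := IsAlgClosed.exists_pow_nat_eq (k := K) γ hqpos
  set w : Fin 3 → K := ![a, b, c] with hw
  have hwne : w ≠ 0 := by
    intro h
    apply h0
    have ha0 : a = 0 := by have := congrFun h 0; simpa [hw] using this
    have hb0 : b = 0 := by have := congrFun h 1; simpa [hw] using this
    have hc0 : c = 0 := by have := congrFun h 2; simpa [hw] using this
    exact ⟨by rw [← ha, ha0, zero_pow hqpos.ne'],
      by rw [← hb, hb0, zero_pow hqpos.ne'],
      by rw [← hc, hc0, zero_pow hqpos.ne']⟩
  refine ⟨Projectivization.mk K w hwne, ?_, ?_⟩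
  · set P := Projectivization.mk K w hwne
    obtain ⟨u, hu⟩ := Projectivization.exists_smul_eq_mk_rep K w hwne
    have hrep : P.rep = (u : K) • w := hu.symm
    apply (hmain P.rep P.rep_nonzero).2
    refine ⟨(u : K) ^ q, pow_ne_zero _ u.ne_zero, ?_, ?_, ?_⟩
    · rw [hrep]; simp [hw, mul_pow, ha]
    · rw [hrep]; simp [hw, mul_pow, hb]
    · rw [hrep]; simp [hw, mul_pow, hc]
  · intro Q hQ
    set P := Projectivization.mk K w hwne with hPdef
    obtain ⟨l, hl, hQx, hQy, hQz⟩ := (hmain Q.rep Q.rep_nonzero).1 hQ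
    obtain ⟨u, hu⟩ := Projectivization.exists_smul_eq_mk_rep K w hwne
    have hrep : P.rep = (u : K) • w := hu.symm
    -- P.rep coordinates to the q: u^q * α etc.
    have hPx : P.rep 0 ^ q = (u : K) ^ q * α := by rw [hrep]; simp [hw, mul_pow, ha]
    have hPy : P.rep 1 ^ q = (u : K) ^ q * β := by rw [hrep]; simp [hw, mul_pow, hb]
    have hPz : P.rep 2 ^ q = (u : K) ^ q * γ := by rw [hrep]; simp [hw, mul_pow, hc]
    -- find scalar d with d^q = l / u^q
    obtain ⟨d, hd⟩ := IsAlgClosed.exists_pow_nat_eq (k := K) (l / (u : K) ^ q) hqpos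
    have huq : ((u : K) ^ q) ≠ 0 := pow_ne_zero _ u.ne_zero
    have hdne : d ≠ 0 := by
      have hne : l / (u : K) ^ q ≠ 0 := div_ne_zero hl huq
      intro h; rw [h, zero_pow hqpos.ne'] at hd
      exact hne hd.symm
    have key : ∀ i, Q.rep i = d * P.rep i := by
      intro i
      apply qinj
      rw [mul_pow, hd]
      fin_cases i
      · show Q.rep 0 ^ q = l / (u : K) ^ q * P.rep 0 ^ q
        rw [hQx, hPx]; field_simp
      · show Q.rep 1 ^ q = l / (u : K) ^ q * P.rep 1 ^ q
        rw [hQy, hPy]; field_simp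
      · show Q.rep 2 ^ q = l / (u : K) ^ q * P.rep 2 ^ q
        rw [hQz, hPz]; field_simp
    have : Q.rep = d • P.rep := by funext i; simpa using key i
    calc Q = Projectivization.mk K Q.rep Q.rep_nonzero := (Projectivization.mk_rep Q).symm
      _ = Projectivization.mk K P.rep P.rep_nonzero := by
          rw [Projectivization.mk_eq_mk_iff]
          exact ⟨Units.mk0 d hdne, this.symm⟩
      _ = P := Projectivization.mk_rep P
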